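/- Let l ≥ 0 and let φ : (0,∞) → [0,∞) be measurable with φ(η) = 0 for η > 1, φ(η) ≤ C(1−η)^k on (0,1) for some C > 0, k > −1, and φ(η) > 0 for η in some interval (1−ε₀, 1). For j > −1 define g_j(u) = u^{−(2j+1)} ∫_u^1 φ(η)(η² − u²)^j dη for u ∈ (0,1] and g_j(u) = 0 for u > 1. Let y : [0,∞) → (0,∞) be continuous, strictly increasing on the set where it is less than 1, with y(0) ∈ (0,1), and suppose y(r) > 1 for some r. Define ρ(r) = c_l r^{2l} ( g_{l+3/2} + g_{l+1/2} )( y(r) ) with c_l = 2π ∫₀¹ s^l (1−s)^{−1/2} ds. Then, with R₁ = sup{ r ≥ 0 : y(r) < 1 } ∈ (0,∞), one has ρ(r) > 0 for 0 < r < R₁ and ρ(r) = 0 for r > R₁; moreover if l = 0 then ρ is strictly decreasing on (0, R₁). -/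

import Mathlib

open Real MeasureTheory Filter Topology Set

/-- `g_j(u) = u^{−(2j+1)} ∫_u^1 φ(η)(η² − u²)^j dη` for `u ≤ 1`, and `g_j(u) = 0` for `u > 1`. -/
noncomputable def gfun (φ : ℝ → ℝ) (j u : ℝ) : ℝ :=
  if u ≤ 1 then u ^ (-(2 * j + 1)) * ∫ η in u..1, φ η * (η ^ 2 - u ^ 2) ^ j else 0

section Aux

variable {φ : ℝ → ℝ} {C k j u ε₀ : ℝ}

/-- Interval-integrability of the weight `(1-η)^k` for `k > -1`. -/
lemma aux_weight (hk : -1 < k) (a : ℝ) :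
    IntervalIntegrable (fun η : ℝ => C * (1 - η) ^ k) volume a 1 := by
  have h1 : IntervalIntegrable (fun x : ℝ => x ^ k) volume 0 (1 - a) :=
    intervalIntegral.intervalIntegrable_rpow' hk
  have h2 := h1.comp_sub_left 1
  simp only [sub_zero, sub_sub_cancel] at h2
  exact (h2.const_mul C).symm

lemma aux_integ (hφ_meas : Measurable φ) (hφ_nonneg : ∀ η > 0, 0 ≤ φ η)
    (hφ_bound : ∀ η ∈ Ioo (0:ℝ) 1, φ η ≤ C * (1 - η) ^ k)
    (hk : -1 < k) (hj : 0 ≤ j) (hu : 0 ≤ u) {a : ℝ}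
    (hua : u ≤ a) (ha1 : a ≤ 1) :
    IntervalIntegrable (fun η => φ η * (η ^ 2 - u ^ 2) ^ j) volume a 1 := by
  have hmeas : Measurable (fun η => φ η * (η ^ 2 - u ^ 2) ^ j) := by
    apply hφ_meas.mul
    fun_prop
  apply (aux_weight hk a).mono_fun hmeas.aestronglyMeasurable.restrict
  have hne : ∀ᵐ x ∂(volume.restrict (Set.uIoc a 1)), x ≠ (1:ℝ) := by
    apply ae_restrict_of_ae
    rw [ae_iff]
    simp only [ne_eq, not_not]
    have : {x : ℝ | x = 1} = {(1:ℝ)} := by ext x; simp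
    rw [this]
    exact Real.volume_singleton
  filter_upwards [ae_restrict_mem measurableSet_uIoc, hne] with x hx hx1
  rw [uIoc_of_le ha1] at hx
  have hx0 : 0 < x := lt_of_le_of_lt (hu.trans hua) hx.1
  have hxlt1 : x < 1 := lt_of_le_of_ne hx.2 hx1
  have hux : u ≤ x := hua.trans hx.1.le
  have hbase0 : 0 ≤ x ^ 2 - u ^ 2 := by nlinarith
  have hbase1 : x ^ 2 - u ^ 2 ≤ 1 := by nlinarith
  have hr0 : 0 ≤ (x ^ 2 - u ^ 2) ^ j := Real.rpow_nonneg hbase0 j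
  have hr1 : (x ^ 2 - u ^ 2) ^ j ≤ 1 := Real.rpow_le_one hbase0 hbase1 hj
  have hφx := hφ_nonneg x hx0
  have hCk : 0 ≤ C * (1 - x) ^ k := by
    have := (hφ_bound x ⟨hx0, hxlt1⟩)
    linarith [hφx]
  rw [Real.norm_eq_abs, Real.norm_eq_abs, abs_of_nonneg (mul_nonneg hφx hr0),
    abs_of_nonneg hCk]
  calc φ x * (x ^ 2 - u ^ 2) ^ j ≤ φ x * 1 := by
        exact mul_le_mul_of_nonneg_left hr1 hφx
    _ = φ x := mul_one _
    _ ≤ C * (1 - x) ^ k := hφ_bound x ⟨hx0, hxlt1⟩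

lemma aux_pos (hφ_meas : Measurable φ) (hφ_nonneg : ∀ η > 0, 0 ≤ φ η)
    (hφ_bound : ∀ η ∈ Ioo (0:ℝ) 1, φ η ≤ C * (1 - η) ^ k)
    (hk : -1 < k) (hj : 0 ≤ j)
    (hε : ε₀ ∈ Ioo (0:ℝ) 1) (hφp : ∀ η ∈ Ioo (1 - ε₀) 1, 0 < φ η)
    (hu : 0 < u) (hu1 : u < 1) :
    0 < ∫ η in u..1, φ η * (η ^ 2 - u ^ 2) ^ j := by
  set m : ℝ := max u (1 - ε₀) with hm
  have hml1 : m < 1 := max_lt hu1 (by linarith [hε.1])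
  have hum : u ≤ m := le_max_left _ _
  have hm0 : 0 < m := lt_of_lt_of_le hu hum
  have hInt1 : IntervalIntegrable (fun η => φ η * (η ^ 2 - u ^ 2) ^ j) volume u 1 :=
    aux_integ hφ_meas hφ_nonneg hφ_bound hk hj hu.le le_rfl hu1.le
  have hIntm1 : IntervalIntegrable (fun η => φ η * (η ^ 2 - u ^ 2) ^ j) volume m 1 :=
    aux_integ hφ_meas hφ_nonneg hφ_bound hk hj hu.le hum hml1.le
  have hIntum : IntervalIntegrable (fun η => φ η * (η ^ 2 - u ^ 2) ^ j) volume u m :=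
    hInt1.mono_set (by rw [uIcc_of_le hum, uIcc_of_le (hu1.le)]
                       exact Icc_subset_Icc le_rfl hml1.le)
  have hsplit := intervalIntegral.integral_add_adjacent_intervals hIntum hIntm1
  have h1 : 0 ≤ ∫ η in u..m, φ η * (η ^ 2 - u ^ 2) ^ j := by
    apply intervalIntegral.integral_nonneg hum
    intro x hx
    have hx0 : 0 < x := lt_of_lt_of_le hu hx.1
    have : 0 ≤ x ^ 2 - u ^ 2 := by nlinarith [hx.1]
    exact mul_nonneg (hφ_nonneg x hx0) (Real.rpow_nonneg this j)
  have h2 : 0 < ∫ η in m..1, φ η * (η ^ 2 - u ^ 2) ^ j := by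
    apply intervalIntegral.intervalIntegral_pos_of_pos_on hIntm1 _ hml1
    intro x hx
    have hx1 : 1 - ε₀ < x := lt_of_le_of_lt (le_max_right _ _) hx.1
    have hux : u < x := lt_of_le_of_lt hum hx.1
    have hbase : 0 < x ^ 2 - u ^ 2 := by nlinarith
    exact mul_pos (hφp x ⟨hx1, hx.2⟩) (Real.rpow_pos_of_pos hbase j)
  linarith [hsplit, h1, h2]

lemma aux_gpos (hφ_meas : Measurable φ) (hφ_nonneg : ∀ η > 0, 0 ≤ φ η)
    (hφ_bound : ∀ η ∈ Ioo (0:ℝ) 1, φ η ≤ C * (1 - η) ^ k)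
    (hk : -1 < k) (hj : 0 ≤ j)
    (hε : ε₀ ∈ Ioo (0:ℝ) 1) (hφp : ∀ η ∈ Ioo (1 - ε₀) 1, 0 < φ η)
    (hu : 0 < u) (hu1 : u < 1) : 0 < gfun φ j u := by
  rw [gfun, if_pos hu1.le]
  exact mul_pos (Real.rpow_pos_of_pos hu _)
    (aux_pos hφ_meas hφ_nonneg hφ_bound hk hj hε hφp hu hu1)

lemma aux_glt {u₁ u₂ : ℝ} (hφ_meas : Measurable φ) (hφ_nonneg : ∀ η > 0, 0 ≤ φ η)
    (hφ_bound : ∀ η ∈ Ioo (0:ℝ) 1, φ η ≤ C * (1 - η) ^ k)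
    (hk : -1 < k) (hj : 0 ≤ j)
    (hε : ε₀ ∈ Ioo (0:ℝ) 1) (hφp : ∀ η ∈ Ioo (1 - ε₀) 1, 0 < φ η)
    (hu1 : 0 < u₁) (h12 : u₁ < u₂) (hu2 : u₂ < 1) :
    gfun φ j u₂ < gfun φ j u₁ := by
  have hu1' : u₁ < 1 := h12.trans hu2
  have hu2pos : 0 < u₂ := hu1.trans h12
  set F₁ : ℝ := ∫ η in u₁..1, φ η * (η ^ 2 - u₁ ^ 2) ^ j with hF₁
  set F₂ : ℝ := ∫ η in u₂..1, φ η * (η ^ 2 - u₂ ^ 2) ^ j with hF₂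
  have hI21 : IntervalIntegrable (fun η => φ η * (η ^ 2 - u₂ ^ 2) ^ j) volume u₂ 1 :=
    aux_integ hφ_meas hφ_nonneg hφ_bound hk hj hu2pos.le le_rfl hu2.le
  have hI11 : IntervalIntegrable (fun η => φ η * (η ^ 2 - u₁ ^ 2) ^ j) volume u₁ 1 :=
    aux_integ hφ_meas hφ_nonneg hφ_bound hk hj hu1.le le_rfl hu1'.le
  have hI12 : IntervalIntegrable (fun η => φ η * (η ^ 2 - u₁ ^ 2) ^ j) volume u₂ 1 :=
    aux_integ hφ_meas hφ_nonneg hφ_bound hk hj hu1.le h12.le hu2.le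
  have hI1m : IntervalIntegrable (fun η => φ η * (η ^ 2 - u₁ ^ 2) ^ j) volume u₁ u₂ :=
    hI11.mono_set (by rw [uIcc_of_le h12.le, uIcc_of_le hu1'.le]
                      exact Icc_subset_Icc le_rfl hu2.le)
  -- F₂ ≤ ∫_{u₂}^1 φ(η)(η²−u₁²)^j
  have step1 : F₂ ≤ ∫ η in u₂..1, φ η * (η ^ 2 - u₁ ^ 2) ^ j := by
    apply intervalIntegral.integral_mono_on hu2.le hI21 hI12
    intro x hx
    have hx0 : 0 < x := hu2pos.trans_le hx.1
    have hb2 : 0 ≤ x ^ 2 - u₂ ^ 2 := by nlinarith [hx.1]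
    have hb12 : x ^ 2 - u₂ ^ 2 ≤ x ^ 2 - u₁ ^ 2 := by nlinarith
    exact mul_le_mul_of_nonneg_left (Real.rpow_le_rpow hb2 hb12 hj) (hφ_nonneg x hx0)
  -- ∫_{u₂}^1 φ(η)(η²−u₁²)^j ≤ F₁
  have step2 : (∫ η in u₂..1, φ η * (η ^ 2 - u₁ ^ 2) ^ j) ≤ F₁ := by
    have hsplit := intervalIntegral.integral_add_adjacent_intervals hI1m hI12
    have hnn : 0 ≤ ∫ η in u₁..u₂, φ η * (η ^ 2 - u₁ ^ 2) ^ j := by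
      apply intervalIntegral.integral_nonneg h12.le
      intro x hx
      have hx0 : 0 < x := hu1.trans_le hx.1
      have : 0 ≤ x ^ 2 - u₁ ^ 2 := by nlinarith [hx.1]
      exact mul_nonneg (hφ_nonneg x hx0) (Real.rpow_nonneg this j)
    rw [hF₁]
    linarith [hsplit]
  have hF₂pos : 0 < F₂ :=
    aux_pos hφ_meas hφ_nonneg hφ_bound hk hj hε hφp hu2pos hu2
  have hF₂F₁ : F₂ ≤ F₁ := step1.trans step2
  have hz : -(2 * j + 1) < 0 := by linarith
  have hpow : u₂ ^ (-(2 * j + 1)) < u₁ ^ (-(2 * j + 1)) :=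
    Real.rpow_lt_rpow_of_neg hu1 h12 hz
  rw [gfun, gfun, if_pos hu2.le, if_pos hu1'.le, ← hF₁, ← hF₂]
  calc u₂ ^ (-(2 * j + 1)) * F₂ < u₁ ^ (-(2 * j + 1)) * F₂ :=
        mul_lt_mul_of_pos_right hpow hF₂pos
    _ ≤ u₁ ^ (-(2 * j + 1)) * F₁ :=
        mul_le_mul_of_nonneg_left hF₂F₁ (Real.rpow_nonneg hu1.le _)

lemma aux_gzero (hu : 1 ≤ u) : gfun φ j u = 0 := by
  rcases eq_or_lt_of_le hu with h | h
  · rw [gfun, if_pos h.symm.le, ← h, intervalIntegral.integral_same, mul_zero]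
  · rw [gfun, if_neg (not_le.mpr h)]

lemma aux_cl_pos {l : ℝ} (hl : 0 ≤ l) :
    0 < 2 * π * ∫ s in (0:ℝ)..1, s ^ l * (1 - s) ^ (-(1 / 2) : ℝ) := by
  have hint : IntervalIntegrable (fun s : ℝ => s ^ l * (1 - s) ^ (-(1 / 2) : ℝ))
      volume 0 1 := by
    have hw : IntervalIntegrable (fun s : ℝ => (1:ℝ) * (1 - s) ^ (-(1 / 2) : ℝ))
        volume 0 1 := aux_weight (by norm_num) 0
    apply hw.mono_fun
    · exact (by fun_prop :
        Measurable (fun s : ℝ => s ^ l * (1 - s) ^ (-(1 / 2) : ℝ))).aestronglyMeasurable.restrict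
    · filter_upwards [ae_restrict_mem measurableSet_uIoc] with x hx
      rw [uIoc_of_le (by norm_num : (0:ℝ) ≤ 1)] at hx
      have hx0 : 0 < x := hx.1
      have hx1 : x ≤ 1 := hx.2
      have h1s : 0 ≤ 1 - x := by linarith
      have hr : 0 ≤ (1 - x) ^ (-(1 / 2) : ℝ) := Real.rpow_nonneg h1s _
      have hsl : x ^ l ≤ 1 := Real.rpow_le_one hx0.le hx1 hl
      rw [Real.norm_eq_abs, Real.norm_eq_abs,
        abs_of_nonneg (mul_nonneg (Real.rpow_nonneg hx0.le l) hr),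
        abs_of_nonneg (by linarith [hr] : (0:ℝ) ≤ 1 * (1 - x) ^ (-(1 / 2) : ℝ))]
      rw [one_mul]
      calc x ^ l * (1 - x) ^ (-(1 / 2) : ℝ) ≤ 1 * (1 - x) ^ (-(1 / 2) : ℝ) :=
            mul_le_mul_of_nonneg_right hsl hr
        _ = (1 - x) ^ (-(1 / 2) : ℝ) := one_mul _
  have hpos : 0 < ∫ s in (0:ℝ)..1, s ^ l * (1 - s) ^ (-(1 / 2) : ℝ) := by
    apply intervalIntegral.intervalIntegral_pos_of_pos_on hint _ (by norm_num)
    intro x hx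
    exact mul_pos (Real.rpow_pos_of_pos hx.1 l)
      (Real.rpow_pos_of_pos (by linarith [hx.2]) _)
  have : 0 < 2 * π := by positivity
  positivity

end Aux

/-- Observations 3.2 and 3.3: for `L₀ = 0` the support of the energy density
`ρ(r) = c_l r^{2l}(g_{l+3/2} + g_{l+1/2})(y(r))` is an interval `[0,R₁]` (a non-shell),
and in the isotropic case `l = 0` the energy density is strictly decreasing on `(0,R₁)`. -/
theorem nonshell_support
    (l : ℝ) (hl : 0 ≤ l)
    (φ : ℝ → ℝ) (hφ_meas : Measurable φ) (hφ_nonneg : ∀ η > 0, 0 ≤ φ η)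
    (hφ_zero : ∀ η > 1, φ η = 0)
    (C k : ℝ) (hC : 0 < C) (hk : -1 < k)
    (hφ_bound : ∀ η ∈ Ioo (0:ℝ) 1, φ η ≤ C * (1 - η) ^ k)
    (hφ_pos : ∃ ε₀ ∈ Ioo (0:ℝ) 1, ∀ η ∈ Ioo (1 - ε₀) 1, 0 < φ η)
    (y : ℝ → ℝ) (hy_cont : ContinuousOn y (Ici 0))
    (hy_mono : StrictMonoOn y {r | 0 ≤ r ∧ y r < 1})
    (hy0 : y 0 ∈ Ioo (0:ℝ) 1)
    (hy_big : ∃ r ≥ 0, 1 < y r)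
    (cl : ℝ) (hcl : cl = 2 * π * ∫ s in (0:ℝ)..1, s ^ l * (1 - s) ^ (-(1 / 2) : ℝ))
    (ρ : ℝ → ℝ)
    (hρ : ∀ r, ρ r = cl * r ^ (2 * l) *
      (gfun φ (l + 3 / 2) (y r) + gfun φ (l + 1 / 2) (y r))) :
    BddAbove {r | 0 ≤ r ∧ y r < 1} ∧
    0 < sSup {r | 0 ≤ r ∧ y r < 1} ∧
    (∀ r, 0 < r → r < sSup {r | 0 ≤ r ∧ y r < 1} → 0 < ρ r) ∧
    (∀ r, sSup {r | 0 ≤ r ∧ y r < 1} < r → ρ r = 0) ∧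
    (l = 0 → StrictAntiOn ρ (Ioo 0 (sSup {r | 0 ≤ r ∧ y r < 1}))) := by
  obtain ⟨ε₀, hε₀, hφp⟩ := hφ_pos
  obtain ⟨r₀, hr₀0, hr₀⟩ := hy_big
  set S := {r : ℝ | 0 ≤ r ∧ y r < 1} with hS
  have h0S : (0:ℝ) ∈ S := ⟨le_rfl, hy0.2⟩
  have hSne : S.Nonempty := ⟨0, h0S⟩
  -- S is bounded above by r₀
  have hbdd : BddAbove S := by
    refine ⟨r₀, fun r hr => ?_⟩
    by_contra hcon
    push_neg at hcon
    have hr0r : r₀ < r := hcon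
    set v : ℝ := (y r + 1) / 2 with hv
    have hv1 : v < 1 := by
      have := hr.2; simp only [hv]; linarith
    have hvyr : y r < v := by
      have := hr.2; simp only [hv]; linarith
    have hcont : ContinuousOn y (Icc r₀ r) :=
      hy_cont.mono (fun x hx => le_trans hr₀0 hx.1)
    have hmem : v ∈ Icc (y r) (y r₀) := ⟨hvyr.le, by linarith⟩
    obtain ⟨t, htI, hyt⟩ := intermediate_value_Icc' hr0r.le hcont hmem
    have htS : t ∈ S := ⟨le_trans hr₀0 htI.1, by rw [hyt]; exact hv1⟩
    have htr : t < r := lt_of_le_of_ne htI.2 (by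
      intro h; rw [h] at hyt; rw [hyt] at hvyr; exact lt_irrefl _ hvyr)
    have := hy_mono htS hr htr
    rw [hyt] at this
    exact absurd this (not_lt.mpr hvyr.le)
  set R₁ := sSup S with hR₁
  -- R₁ > 0
  have hR₁pos : 0 < R₁ := by
    have hcw : ContinuousWithinAt y (Ici 0) 0 := hy_cont 0 (by exact self_mem_Ici)
    have hpre : y ⁻¹' (Iio 1) ∈ 𝓝[Ici 0] (0:ℝ) := hcw (Iio_mem_nhds hy0.2)
    rw [show 𝓝[Ici (0:ℝ)] 0 = 𝓝[≥] 0 from rfl] at hpre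
    obtain ⟨u, hu0, hu⟩ := (mem_nhdsGE_iff_exists_Icc_subset).mp hpre
    have huS : u ∈ S := ⟨le_of_lt hu0, hu ⟨hu0.le, le_rfl⟩⟩
    exact lt_of_lt_of_le hu0 (le_csSup hbdd huS)
  -- key: any 0 ≤ r < R₁ satisfies y r < 1
  have hkey : ∀ r, 0 ≤ r → r < R₁ → y r < 1 := by
    intro r hr0 hrR
    by_contra hcon
    push_neg at hcon
    obtain ⟨s, hsS, hrs⟩ := exists_lt_of_lt_csSup hSne hrR
    set v : ℝ := (y s + 1) / 2 with hv
    have hv1 : v < 1 := by have := hsS.2; simp only [hv]; linarith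
    have hvys : y s < v := by have := hsS.2; simp only [hv]; linarith
    have hcont : ContinuousOn y (Icc r s) := hy_cont.mono (fun x hx => le_trans hr0 hx.1)
    have hmem : v ∈ Icc (y s) (y r) := ⟨hvys.le, by linarith⟩
    obtain ⟨t, htI, hyt⟩ := intermediate_value_Icc' hrs.le hcont hmem
    have htS : t ∈ S := ⟨le_trans hr0 htI.1, by rw [hyt]; exact hv1⟩
    have hts : t < s := lt_of_le_of_ne htI.2 (by
      intro h; rw [h] at hyt; rw [hyt] at hvys; exact lt_irrefl _ hvys)
    have := hy_mono htS hsS hts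
    rw [hyt] at this
    exact absurd this (not_lt.mpr hvys.le)
  have hclpos : 0 < cl := by rw [hcl]; exact aux_cl_pos hl
  have hj1 : (0:ℝ) ≤ l + 3 / 2 := by linarith
  have hj2 : (0:ℝ) ≤ l + 1 / 2 := by linarith
  refine ⟨hbdd, hR₁pos, ?_, ?_, ?_⟩
  · -- positivity on (0, R₁)
    intro r hr0 hrR
    have hyr1 : y r < 1 := hkey r hr0.le hrR
    have hrS : r ∈ S := ⟨hr0.le, hyr1⟩
    have hyr0 : 0 < y r := lt_trans hy0.1 (hy_mono h0S hrS hr0)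
    rw [hρ r]
    have hg1 := aux_gpos hφ_meas hφ_nonneg hφ_bound hk hj1 hε₀ hφp hyr0 hyr1
    have hg2 := aux_gpos hφ_meas hφ_nonneg hφ_bound hk hj2 hε₀ hφp hyr0 hyr1
    exact mul_pos (mul_pos hclpos (Real.rpow_pos_of_pos hr0 _)) (add_pos hg1 hg2)
  · -- vanishing beyond R₁
    intro r hRr
    have hyr : 1 ≤ y r := by
      by_contra hcon
      push_neg at hcon
      have hrS : r ∈ S := ⟨(hR₁pos.trans hRr).le, hcon⟩
      exact absurd (le_csSup hbdd hrS) (not_le.mpr hRr)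
    rw [hρ r, aux_gzero hyr, aux_gzero hyr, add_zero, mul_zero]
  · -- strict decrease for l = 0
    intro hl0
    subst hl0
    intro a ha b hb hab
    have hya1 : y a < 1 := hkey a ha.1.le ha.2
    have hyb1 : y b < 1 := hkey b hb.1.le hb.2
    have haS : a ∈ S := ⟨ha.1.le, hya1⟩
    have hbS : b ∈ S := ⟨hb.1.le, hyb1⟩
    have hya0 : 0 < y a := lt_trans hy0.1 (hy_mono h0S haS ha.1)
    have hyab : y a < y b := hy_mono haS hbS hab
    have hg1 := aux_glt hφ_meas hφ_nonneg hφ_bound hk hj1 hε₀ hφp hya0 hyab hyb1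
    have hg2 := aux_glt hφ_meas hφ_nonneg hφ_bound hk hj2 hε₀ hφp hya0 hyab hyb1
    rw [hρ a, hρ b]
    have h2l : (2:ℝ) * 0 = 0 := by norm_num
    rw [h2l, Real.rpow_zero, Real.rpow_zero, mul_one]
    exact mul_lt_mul_of_pos_left (add_lt_add hg1 hg2) hclpos
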